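/- Let q be a prime, v ≥ 1, and let N > 1 with gcd(N,b)=1, b > 1, and q^v dividing ord_N(b). Write ord_N(b) = q^t·k with gcd(q,k)=1 (so t ≥ v). Then q^v ∈ M_b(N) if and only if N = q^n·p₁^{h₁}···p_l^{h_l} with distinct primes p_i ≠ q, 0 ≤ n ≤ v, ν_q(ord_{p_i}(b)) > 0 for all i, and max{n − m, max_i ν_q(ord_{p_i}(b))} − v < min_i ν_q(ord_{p_i}(b)), where m = ν_q(b^{ord_q(b)} − 1). -/

import Mathlib

open Finset

lemma Aux.dvd_iff_pow_eq {M b e : ℕ} (hb : 1 < b) :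
    M ∣ b ^ e - 1 ↔ (b : ZMod M) ^ e = 1 := by
  have h1 : 1 ≤ b ^ e := Nat.one_le_pow _ _ (by omega)
  rw [← ZMod.natCast_eq_zero_iff, Nat.cast_sub h1, Nat.cast_pow, Nat.cast_one,
    sub_eq_zero]

lemma Aux.dvd_iff_order_dvd {M b e : ℕ} (hb : 1 < b) :
    M ∣ b ^ e - 1 ↔ orderOf (b : ZMod M) ∣ e := by
  rw [Aux.dvd_iff_pow_eq hb, orderOf_dvd_iff_pow_eq_one]

lemma Aux.step {q x i : ℕ} (hx : 1 ≤ x) (h1 : q ∣ x - 1) (hi : q ^ i ∣ x - 1) :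
    q ^ (i + 1) ∣ x ^ q - 1 := by
  have hc : ((x - 1 : ℕ) : ℤ) = (x : ℤ) - 1 := by push_cast [hx]; ring
  have h1' : (q : ℤ) ∣ (x : ℤ) - 1 := by rw [← hc]; exact_mod_cast h1
  have hi' : (q : ℤ) ^ i ∣ (x : ℤ) - 1 := by rw [← hc]; exact_mod_cast hi
  have key : (q : ℤ) ∣ ∑ j ∈ Finset.range q, (x : ℤ) ^ j := by
    have e1 : ∑ j ∈ Finset.range q, (x : ℤ) ^ j
        = (∑ j ∈ Finset.range q, ((x : ℤ) ^ j - 1)) + q := by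
      rw [Finset.sum_sub_distrib, Finset.sum_const, Finset.card_range]
      push_cast; ring
    rw [e1]
    refine dvd_add (Finset.dvd_sum fun j _ => h1'.trans ?_) dvd_rfl
    simpa using sub_dvd_pow_sub_pow (x : ℤ) 1 j
  have main : (q : ℤ) ^ (i + 1) ∣ (x : ℤ) ^ q - 1 := by
    rw [← geom_sum_mul, pow_succ, mul_comm (∑ j ∈ Finset.range q, (x : ℤ) ^ j) _]
    exact mul_dvd_mul hi' key
  have hc2 : ((x ^ q - 1 : ℕ) : ℤ) = (x : ℤ) ^ q - 1 := by
    push_cast [Nat.one_le_pow _ _ (by omega : 0 < x)]; ring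
  exact_mod_cast hc2 ▸ main

lemma Aux.iter {q x m : ℕ} (hx : 1 ≤ x) (h1 : q ∣ x - 1) (hm : q ^ m ∣ x - 1) (s : ℕ) :
    q ^ (m + s) ∣ x ^ q ^ s - 1 := by
  induction s with
  | zero => simpa using hm
  | succ s ih =>
    have hx' : 1 ≤ x ^ q ^ s := Nat.one_le_pow _ _ (by omega)
    have h1' : q ∣ x ^ q ^ s - 1 := h1.trans (by simpa using Nat.sub_dvd_pow_sub_pow x 1 (q ^ s))
    have := Aux.step hx' h1' ih
    rwa [← pow_mul, ← pow_succ, show m + s + 1 = m + (s + 1) by omega] at this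

lemma Aux.order_map_dvd {b M N : ℕ} (h : M ∣ N) :
    orderOf (b : ZMod M) ∣ orderOf (b : ZMod N) := by
  apply orderOf_dvd_of_pow_eq_one
  have := congrArg (ZMod.castHom h (ZMod M)) (pow_orderOf_eq_one (b : ZMod N))
  rw [map_pow, map_natCast, map_one] at this
  exact this

lemma Aux.order_pos {b M : ℕ} (hM : 0 < M) (hco : Nat.Coprime b M) :
    0 < orderOf (b : ZMod M) := by
  haveI : NeZero M := ⟨by omega⟩
  have h : IsUnit (b : ZMod M) := (ZMod.isUnit_iff_coprime b M).mpr hco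
  rw [← h.unit_spec, orderOf_units]
  exact orderOf_pos _

lemma Aux.ord_pow_dvd {p b : ℕ} (hb : 1 < b) (j : ℕ) :
    p ^ (j + 1) ∣ b ^ (orderOf (b : ZMod p) * p ^ j) - 1 := by
  induction j with
  | zero => simpa using (Aux.dvd_iff_order_dvd hb).mpr dvd_rfl
  | succ j ih =>
    have h0 : p ∣ b ^ orderOf (b : ZMod p) - 1 := (Aux.dvd_iff_order_dvd hb).mpr dvd_rfl
    have hx : 1 ≤ b ^ (orderOf (b : ZMod p) * p ^ j) := Nat.one_le_pow _ _ (by omega)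
    have h1 : p ∣ b ^ (orderOf (b : ZMod p) * p ^ j) - 1 := by
      refine h0.trans ?_
      have := Nat.sub_dvd_pow_sub_pow (b ^ orderOf (b : ZMod p)) 1 (p ^ j)
      simpa [← pow_mul] using this
    have := Aux.step hx h1 ih
    rwa [← pow_mul, mul_assoc, ← pow_succ] at this

lemma Aux.order_pow_dvd' {p b h : ℕ} (hb : 1 < b) (hh : 0 < h) :
    orderOf (b : ZMod (p ^ h)) ∣ orderOf (b : ZMod p) * p ^ (h - 1) := by
  rw [← Aux.dvd_iff_order_dvd hb]
  have := Aux.ord_pow_dvd (p := p) hb (h - 1)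
  rwa [show h - 1 + 1 = h by omega] at this

lemma Aux.pv_mono {q a c : ℕ} [Fact q.Prime] (h : a ∣ c) (hc : c ≠ 0) :
    padicValNat q a ≤ padicValNat q c :=
  (padicValNat_dvd_iff_le hc).mp (dvd_trans pow_padicValNat_dvd h)

lemma Aux.pv_mul_pow {q t k : ℕ} [Fact q.Prime] (hqk : ¬q ∣ k) (hk : k ≠ 0) :
    padicValNat q (q ^ t * k) = t := by
  rw [padicValNat.mul (pow_ne_zero _ (Nat.Prime.ne_zero Fact.out)) hk,
    padicValNat.prime_pow, padicValNat.eq_zero_of_not_dvd hqk, add_zero]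

lemma Aux.dvd_shift {q k t s o : ℕ} [Fact q.Prime] (hqk : ¬q ∣ k) (hk : k ≠ 0)
    (ho : o ≠ 0) (h : o ∣ q ^ t * k) :
    o ∣ q ^ s * k ↔ padicValNat q o ≤ s := by
  have hq : Nat.Prime q := Fact.out
  constructor
  · intro hd
    have := Aux.pv_mono (q := q) hd (Nat.mul_ne_zero (pow_ne_zero _ hq.ne_zero) hk)
    rwa [Aux.pv_mul_pow hqk hk] at this
  · intro hs
    have hdecomp := Nat.ordProj_mul_ordCompl_eq_self o q
    set c := o / q ^ o.factorization q with hc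
    have hqc : ¬ q ∣ c := Nat.not_dvd_ordCompl hq ho
    have hcc : Nat.Coprime c q := (Nat.coprime_comm.mp ((Nat.Prime.coprime_iff_not_dvd hq).mpr hqc))
    have hck : c ∣ k := by
      have h1 : c ∣ q ^ t * k := (Nat.div_dvd_of_dvd (Nat.ordProj_dvd o q)).trans h
      exact (Nat.Coprime.pow_right t hcc).dvd_of_dvd_mul_left h1
    have hfac : o.factorization q = padicValNat q o := Nat.factorization_def o hq
    calc o = q ^ o.factorization q * c := hdecomp.symm
    _ ∣ q ^ s * k := mul_dvd_mul (pow_dvd_pow q (hfac ▸ hs)) hck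

lemma Aux.oq_not_dvd {q b : ℕ} [Fact q.Prime] (hqb : ¬q ∣ b) :
    ¬ q ∣ orderOf (b : ZMod q) ∧ 0 < orderOf (b : ZMod q) := by
  have hq : Nat.Prime q := Fact.out
  haveI : NeZero q := ⟨hq.ne_zero⟩
  have hco : Nat.Coprime b q := Nat.coprime_comm.mp ((Nat.Prime.coprime_iff_not_dvd hq).mpr hqb)
  have hpos : 0 < orderOf (b : ZMod q) := Aux.order_pos hq.pos hco
  have h : IsUnit (b : ZMod q) := (ZMod.isUnit_iff_coprime b q).mpr hco
  refine ⟨?_, hpos⟩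
  have hd : orderOf (b : ZMod q) ∣ q - 1 := by
    rw [← h.unit_spec, orderOf_units]
    have := orderOf_dvd_card (G := (ZMod q)ˣ) (x := h.unit)
    rwa [ZMod.card_units q] at this
  intro hcon
  have h2 := hq.two_le
  have h1 : q ≤ q - 1 := Nat.le_of_dvd (by omega) (hcon.trans hd)
  omega

/-- structure of the order mod `q^n`. -/
lemma Aux.ord_q_pow_eq {q b n : ℕ} [Fact q.Prime] (hb : 1 < b) (hqb : ¬q ∣ b) (hn : 0 < n) :
    orderOf (b : ZMod (q ^ n)) =
      q ^ padicValNat q (orderOf (b : ZMod (q ^ n))) * orderOf (b : ZMod q) := by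
  have hq : Nat.Prime q := Fact.out
  obtain ⟨hqo, hopos⟩ := Aux.oq_not_dvd (b := b) hqb
  set oq := orderOf (b : ZMod q) with hoq
  set o := orderOf (b : ZMod (q ^ n)) with ho
  have hco : Nat.Coprime b (q ^ n) :=
    Nat.Coprime.pow_right n (Nat.coprime_comm.mp ((Nat.Prime.coprime_iff_not_dvd hq).mpr hqb))
  have hopos' : 0 < o := Aux.order_pos (pow_pos hq.pos n) hco
  have hd1 : oq ∣ o := Aux.order_map_dvd (dvd_pow_self q hn.ne')
  have hd2 : o ∣ oq * q ^ (n - 1) := Aux.order_pow_dvd' hb hn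
  set c := o / q ^ o.factorization q with hc
  have hdecomp := Nat.ordProj_mul_ordCompl_eq_self o q
  have hqc : ¬ q ∣ c := Nat.not_dvd_ordCompl hq hopos'.ne'
  have hcc : Nat.Coprime c q := Nat.coprime_comm.mp ((Nat.Prime.coprime_iff_not_dvd hq).mpr hqc)
  have hcoq : c ∣ oq := by
    have h1 : c ∣ oq * q ^ (n - 1) := (Nat.div_dvd_of_dvd (Nat.ordProj_dvd o q)).trans hd2
    exact (Nat.Coprime.pow_right _ hcc).dvd_of_dvd_mul_left (by rwa [mul_comm] at h1)
  have hoqc : oq ∣ c := by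
    have hcoqq : Nat.Coprime oq (q ^ o.factorization q) :=
      Nat.Coprime.pow_right _ (Nat.coprime_comm.mp ((Nat.Prime.coprime_iff_not_dvd hq).mpr hqo))
    exact hcoqq.dvd_of_dvd_mul_left (by rw [hdecomp]; exact hd1)
  have : c = oq := Nat.dvd_antisymm hcoq hoqc
  rw [← Nat.factorization_def o hq, ← this]
  exact hdecomp.symm

/-- upper bound: if `g ≥ 1` then `m + g ≤ n`. -/
lemma Aux.g_upper {q b n : ℕ} [Fact q.Prime] (hb : 1 < b) (hqb : ¬q ∣ b) (hn : 0 < n)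
    (hg : 0 < padicValNat q (orderOf (b : ZMod (q ^ n)))) :
    padicValNat q (b ^ orderOf (b : ZMod q) - 1)
      + padicValNat q (orderOf (b : ZMod (q ^ n))) ≤ n := by
  have hq : Nat.Prime q := Fact.out
  obtain ⟨hqo, hopos⟩ := Aux.oq_not_dvd (b := b) hqb
  set oq := orderOf (b : ZMod q) with hoq
  set o := orderOf (b : ZMod (q ^ n)) with ho
  set g := padicValNat q o with hgdef
  set m := padicValNat q (b ^ oq - 1) with hm
  have hx1 : 1 ≤ b ^ oq := Nat.one_le_pow _ _ (by omega)
  have hq1 : q ∣ b ^ oq - 1 := (Aux.dvd_iff_order_dvd hb).mpr dvd_rfl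
  have hqm : q ^ m ∣ b ^ oq - 1 := pow_padicValNat_dvd
  have hiter := Aux.iter hx1 hq1 hqm (g - 1)
  rw [← pow_mul] at hiter
  -- hiter : q ^ (m + (g-1)) ∣ b ^ (oq * q ^ (g-1)) - 1
  have hnot : ¬ q ^ n ∣ b ^ (oq * q ^ (g - 1)) - 1 := by
    intro hcon
    have hdvd : o ∣ oq * q ^ (g - 1) := (Aux.dvd_iff_order_dvd hb).mp hcon
    have := Aux.pv_mono (q := q) hdvd
      (Nat.mul_ne_zero hopos.ne' (pow_ne_zero _ hq.ne_zero))
    rw [padicValNat.mul hopos.ne' (pow_ne_zero _ hq.ne_zero),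
      padicValNat.prime_pow, padicValNat.eq_zero_of_not_dvd hqo, zero_add] at this
    omega
  by_contra hcon
  exact hnot ((pow_dvd_pow q (by omega : n ≤ m + (g - 1))).trans hiter)

/-- lower bound for odd `q` : `n ≤ m + g`. -/
lemma Aux.g_lower {q b n : ℕ} [Fact q.Prime] (hodd : Odd q) (hb : 1 < b) (hqb : ¬q ∣ b)
    (hn : 0 < n) :
    n ≤ padicValNat q (b ^ orderOf (b : ZMod q) - 1)
      + padicValNat q (orderOf (b : ZMod (q ^ n))) := by
  have hq : Nat.Prime q := Fact.out
  obtain ⟨hqo, hopos⟩ := Aux.oq_not_dvd (b := b) hqb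
  have hstruct := Aux.ord_q_pow_eq (q := q) (b := b) hb hqb hn
  have hco : Nat.Coprime b (q ^ n) :=
    Nat.Coprime.pow_right n (Nat.coprime_comm.mp ((Nat.Prime.coprime_iff_not_dvd hq).mpr hqb))
  have hopos' : 0 < orderOf (b : ZMod (q ^ n)) := Aux.order_pos (pow_pos hq.pos n) hco
  set oq := orderOf (b : ZMod q) with hoq
  set o := orderOf (b : ZMod (q ^ n)) with ho
  set g := padicValNat q o with hgdef
  have hx1 : 1 < b ^ oq := Nat.one_lt_pow hopos.ne' hb
  have hq1 : q ∣ b ^ oq - 1 := (Aux.dvd_iff_order_dvd hb).mpr dvd_rfl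
  have hqx : ¬ q ∣ b ^ oq := by
    intro hcon
    have hd : q ∣ b ^ oq - (b ^ oq - 1) := Nat.dvd_sub hcon hq1
    rw [Nat.sub_sub_self (by omega)] at hd
    have := Nat.le_of_dvd one_pos hd
    have := hq.two_le
    omega
  have hXdvd : q ^ n ∣ b ^ o - 1 := (Aux.dvd_iff_order_dvd hb).mpr dvd_rfl
  have hXne : b ^ o - 1 ≠ 0 := by
    have : 1 < b ^ o := Nat.one_lt_pow hopos'.ne' hb
    omega
  have hle : n ≤ padicValNat q (b ^ o - 1) := (padicValNat_dvd_iff_le hXne).mp hXdvd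
  have heq : b ^ o = (b ^ oq) ^ q ^ g := by
    rw [hstruct, mul_comm, pow_mul]
  have hLTE := padicValNat.pow_sub_pow (p := q) hodd (y := 1) hx1 (by simpa using hq1) hqx
    (n := q ^ g) (pow_ne_zero _ hq.ne_zero)
  rw [one_pow, padicValNat.prime_pow] at hLTE
  rw [heq] at hle
  omega

lemma Aux.one_le_pv {q x : ℕ} (hq : q.Prime) (hx : x ≠ 0) (h : q ∣ x) :
    0 < padicValNat q x := by
  haveI := Fact.mk hq
  have := (padicValNat_dvd_iff_le (p := q) hx (n := 1)).mp (by simpa using h)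
  omega

lemma Aux.pv_pos_dvd {q x : ℕ} (hq : q.Prime) (hx : x ≠ 0) (h : 0 < padicValNat q x) :
    q ∣ x := by
  haveI := Fact.mk hq
  have := (padicValNat_dvd_iff_le (p := q) hx (n := 1)).mpr (by omega)
  simpa using this

lemma Aux.pv_lcm {q a c : ℕ} [Fact q.Prime] (ha : a ≠ 0) (hc : c ≠ 0) :
    padicValNat q (Nat.lcm a c) = max (padicValNat q a) (padicValNat q c) := by
  have hq : Nat.Prime q := Fact.out
  have h := congrArg (fun f : ℕ →₀ ℕ => f q) (Nat.factorization_lcm ha hc)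
  simp only [Finsupp.sup_apply] at h
  rw [Nat.factorization_def _ hq, Nat.factorization_def _ hq, Nat.factorization_def _ hq] at h
  exact h

lemma Aux.pv_finset_lcm {q : ℕ} [Fact q.Prime] {S : Finset ℕ} {f : ℕ → ℕ} {w : ℕ}
    (hne : ∀ r ∈ S, f r ≠ 0) (hlt : ∀ r ∈ S, padicValNat q (f r) < w) (hw : 0 < w) :
    S.lcm f ≠ 0 ∧ padicValNat q (S.lcm f) < w := by
  classical
  induction S using Finset.induction with
  | empty => simpa [Finset.lcm_empty] using hw
  | insert _ _ ha ih =>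
    rename_i a S'
    obtain ⟨h1, h2⟩ := ih (fun r hr => hne r (Finset.mem_insert_of_mem hr))
      (fun r hr => hlt r (Finset.mem_insert_of_mem hr))
    have hfa : f a ≠ 0 := hne a (Finset.mem_insert_self a S')
    rw [Finset.lcm_insert]
    refine ⟨?_, ?_⟩
    · exact Nat.lcm_ne_zero hfa h1
    · rw [show (lcm (f a) (S'.lcm f) : ℕ) = Nat.lcm (f a) (S'.lcm f) from rfl,
        Aux.pv_lcm hfa h1]
      exact max_lt (hlt a (Finset.mem_insert_self a S')) h2

lemma Aux.prod_dvd {S : Finset ℕ} (hp : ∀ p ∈ S, p.Prime) {h : ℕ → ℕ} {X : ℕ}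
    (hd : ∀ p ∈ S, p ^ h p ∣ X) : (∏ p ∈ S, p ^ h p) ∣ X := by
  classical
  induction S using Finset.induction with
  | empty => simp
  | insert _ _ ha ih =>
    rename_i a S'
    rw [Finset.prod_insert ha]
    have hco : Nat.Coprime (a ^ h a) (∏ p ∈ S', p ^ h p) := by
      refine Nat.Coprime.pow_left _ (Nat.Coprime.prod_right fun p hp' => ?_)
      exact Nat.Coprime.pow_right _ ((Nat.coprime_primes (hp a (Finset.mem_insert_self a S'))
        (hp p (Finset.mem_insert_of_mem hp'))).mpr (fun he => ha (he ▸ hp')))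
    exact hco.mul_dvd_of_dvd_of_dvd (hd a (Finset.mem_insert_self a S'))
      (ih (fun p hp' => hp p (Finset.mem_insert_of_mem hp'))
        (fun p hp' => hd p (Finset.mem_insert_of_mem hp')))

lemma Aux.pv_ord_pow {q r b hh : ℕ} [Fact q.Prime] (hb : 1 < b) (hr : r.Prime)
    (hne : r ≠ q) (hpos : 0 < hh) (hrb : ¬r ∣ b) :
    padicValNat q (orderOf (b : ZMod (r ^ hh))) = padicValNat q (orderOf (b : ZMod r)) := by
  have hq : Nat.Prime q := Fact.out
  have hcob : Nat.Coprime b r := Nat.coprime_comm.mp ((Nat.Prime.coprime_iff_not_dvd hr).mpr hrb)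
  have h1 : 0 < orderOf (b : ZMod r) := Aux.order_pos hr.pos hcob
  have h2 : 0 < orderOf (b : ZMod (r ^ hh)) :=
    Aux.order_pos (pow_pos hr.pos hh) (Nat.Coprime.pow_right hh hcob)
  refine le_antisymm ?_ ?_
  · have hd := Aux.order_pow_dvd' (p := r) (h := hh) hb hpos
    have := Aux.pv_mono (q := q) hd (Nat.mul_ne_zero h1.ne' (pow_ne_zero _ hr.pos.ne'))
    rwa [padicValNat.mul h1.ne' (pow_ne_zero _ hr.pos.ne'),
      padicValNat.eq_zero_of_not_dvd (fun hc => hne ((Nat.prime_dvd_prime_iff_eq hq hr).mp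
        (hq.dvd_of_dvd_pow hc)).symm), add_zero] at this
  · exact Aux.pv_mono (Aux.order_map_dvd (dvd_pow_self r hpos.ne')) h2.ne'

lemma Aux.fact_decomp {N q : ℕ} (hq : q.Prime) (hN : N ≠ 0) :
    N = q ^ padicValNat q N * ∏ p ∈ N.primeFactors.erase q, p ^ padicValNat p N := by
  classical
  have hbase : ∏ p ∈ N.primeFactors, p ^ N.factorization p = N := by
    rw [← Nat.support_factorization]
    exact Nat.factorization_prod_pow_eq_self hN
  have hcongr : ∀ (T : Finset ℕ), T ⊆ N.primeFactors →
      ∏ p ∈ T, p ^ N.factorization p = ∏ p ∈ T, p ^ padicValNat p N := by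
    intro T hT
    refine Finset.prod_congr rfl fun p hp => ?_
    rw [Nat.factorization_def _ (Nat.prime_of_mem_primeFactors (hT hp))]
  by_cases hqN : q ∈ N.primeFactors
  · rw [← hcongr _ (Finset.erase_subset _ _), ← Nat.factorization_def _ hq,
      Finset.mul_prod_erase _ (fun p => p ^ N.factorization p) hqN, hbase]
  · have hqd : ¬ q ∣ N := fun hd => hqN (Nat.mem_primeFactors.mpr ⟨hq, hd, hN⟩)
    rw [padicValNat.eq_zero_of_not_dvd hqd, pow_zero, one_mul,
      Finset.erase_eq_of_notMem hqN, ← hcongr _ (Finset.Subset.refl _), hbase]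

/-- `d ∈ M_b(N)`: for every prime `p` dividing `gcd(b^{ord_N(b)/d} − 1, N)`,
`ν_p(N) ≤ ν_p(d)`. -/
def MidyProp (b N d : ℕ) : Prop :=
  ∀ p : ℕ, p.Prime → p ∣ Nat.gcd (b ^ (orderOf (b : ZMod N) / d) - 1) N →
    padicValNat p N ≤ padicValNat p d

/-- `q^v ∈ M_b(N)` iff `N = q^n·p₁^{h₁}⋯p_l^{h_l}` with distinct primes
`p_i ≠ q`, `0 ≤ n ≤ v`, `ν_q(ord_{p_i}(b)) > 0`, and
`max{n − m, max_i ν_q(ord_{p_i}(b))} − v < min_i ν_q(ord_{p_i}(b))`,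
where `m = ν_q(b^{ord_q(b)} − 1)`. -/
theorem stmt7 (b N q v t k : ℕ) (hb : 1 < b) (hN : 1 < N) (hco : Nat.Coprime N b)
    (hq : q.Prime) (hv : 0 < v)
    (hord : orderOf (b : ZMod N) = q ^ t * k) (hqk : ¬ q ∣ k) (htv : v ≤ t) :
    MidyProp b N (q ^ v) ↔
      ∃ (n : ℕ) (S : Finset ℕ) (h : ℕ → ℕ),
        n ≤ v ∧ S.Nonempty ∧
        (∀ p ∈ S, p.Prime ∧ p ≠ q ∧ 0 < h p) ∧
        N = q ^ n * ∏ p ∈ S, p ^ h p ∧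
        (∀ p ∈ S, 0 < padicValNat q (orderOf (b : ZMod p))) ∧
        (∀ p' ∈ S,
          ((n : ℤ) - padicValNat q (b ^ orderOf (b : ZMod q) - 1) - v <
              (padicValNat q (orderOf (b : ZMod p')) : ℤ)) ∧
          ∀ p ∈ S, (padicValNat q (orderOf (b : ZMod p)) : ℤ) - v <
              (padicValNat q (orderOf (b : ZMod p')) : ℤ)) := by
  haveI : Fact q.Prime := ⟨hq⟩
  have hN0 : N ≠ 0 := by omega
  have hbN : Nat.Coprime b N := hco.symm
  have hopos : 0 < orderOf (b : ZMod N) := Aux.order_pos (by omega) hbN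
  have hk0 : k ≠ 0 := by rintro rfl; rw [hord, mul_zero] at hopos; omega
  have hEdef : orderOf (b : ZMod N) / q ^ v = q ^ (t - v) * k := by
    rw [hord, show t = v + (t - v) by omega, pow_add, mul_assoc,
      Nat.mul_div_cancel_left _ (pow_pos hq.pos v), Nat.add_sub_cancel_left]
  have htp : padicValNat q (orderOf (b : ZMod N)) = t := by
    rw [hord]; exact Aux.pv_mul_pow hqk hk0
  -- m basics
  set m := padicValNat q (b ^ orderOf (b : ZMod q) - 1) with hmdef
  have hqb_of : q ∣ N → ¬ q ∣ b := by
    intro hqN hqb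
    have h1 : q ∣ Nat.gcd N b := Nat.dvd_gcd hqN hqb
    rw [hco] at h1
    have h2 := hq.two_le
    have h3 := Nat.dvd_one.mp h1
    omega
  have hm1 : q ∣ N → 1 ≤ m := by
    intro hqN
    have hqb := hqb_of hqN
    obtain ⟨hqo, hoqpos⟩ := Aux.oq_not_dvd (b := b) hqb
    have hx1 : 1 < b ^ orderOf (b : ZMod q) := Nat.one_lt_pow hoqpos.ne' hb
    exact Aux.one_le_pv hq (by omega) ((Aux.dvd_iff_order_dvd hb).mpr dvd_rfl)
  constructor
  · -- forward
    intro Mi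
    set n := padicValNat q N with hndef
    set S := N.primeFactors.erase q with hSdef
    have hmem : ∀ p ∈ S, p.Prime ∧ p ≠ q ∧ p ∣ N := by
      intro p hp
      obtain ⟨hne, hpf⟩ := Finset.mem_erase.mp hp
      exact ⟨Nat.prime_of_mem_primeFactors hpf, hne, Nat.dvd_of_mem_primeFactors hpf⟩
    have hdecomp : N = q ^ n * ∏ p ∈ S, p ^ padicValNat p N := Aux.fact_decomp hq hN0
    -- n ≤ v
    have hnv : n ≤ v := by
      by_cases hqN : q ∣ N
      · have hqb := hqb_of hqN
        obtain ⟨hqo, hoqpos⟩ := Aux.oq_not_dvd (b := b) hqb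
        have hoq_dvd : orderOf (b : ZMod q) ∣ q ^ t * k :=
          hord ▸ Aux.order_map_dvd hqN
        have hoq_k : orderOf (b : ZMod q) ∣ k :=
          (Nat.Coprime.pow_right t
            (((Nat.Prime.coprime_iff_not_dvd hq).mpr hqo).symm)).dvd_of_dvd_mul_left hoq_dvd
        have hqE : q ∣ b ^ (q ^ (t - v) * k) - 1 :=
          (Aux.dvd_iff_order_dvd hb).mpr (hoq_k.trans (dvd_mul_left k (q ^ (t - v))))
        have := Mi q hq (Nat.dvd_gcd (by rw [hEdef]; exact hqE) hqN)
        rwa [padicValNat.prime_pow] at this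
      · rw [hndef, padicValNat.eq_zero_of_not_dvd hqN]; omega
    -- key bounds for p ∈ S
    have hap : ∀ p ∈ S, t < padicValNat q (orderOf (b : ZMod p)) + v ∧
        padicValNat q (orderOf (b : ZMod p)) ≤ t := by
      intro p hp
      obtain ⟨hpp, hpq, hpN⟩ := hmem p hp
      have hbp : Nat.Coprime b p := hbN.coprime_dvd_right hpN
      have hppos : 0 < orderOf (b : ZMod p) := Aux.order_pos hpp.pos hbp
      have hdvdN : orderOf (b : ZMod p) ∣ q ^ t * k := hord ▸ Aux.order_map_dvd hpN
      have hle : padicValNat q (orderOf (b : ZMod p)) ≤ t := by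
        have := Aux.pv_mono (q := q) (Aux.order_map_dvd hpN) hopos.ne'
        rwa [htp] at this
      refine ⟨?_, hle⟩
      have hnotgcd : ¬ p ∣ Nat.gcd (b ^ (orderOf (b : ZMod N) / q ^ v) - 1) N := by
        intro hg
        have h1 := Mi p hpp hg
        have h2 : 0 < padicValNat p N := Aux.one_le_pv hpp hN0 hpN
        have h3 : padicValNat p (q ^ v) = 0 :=
          padicValNat.eq_zero_of_not_dvd
            (fun hc => hpq ((Nat.prime_dvd_prime_iff_eq hpp hq).mp (hpp.dvd_of_dvd_pow hc)))
        omega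
      have hnotE : ¬ orderOf (b : ZMod p) ∣ q ^ (t - v) * k := by
        intro hd
        exact hnotgcd (Nat.dvd_gcd
          (by rw [hEdef]; exact (Aux.dvd_iff_order_dvd hb).mpr hd) hpN)
      have := (Aux.dvd_shift (s := t - v) hqk hk0 hppos.ne' hdvdN).not.mp hnotE
      omega
    refine ⟨n, S, fun p => padicValNat p N, hnv, ?_, ?_, hdecomp, ?_, ?_⟩
    · -- nonempty
      rw [Finset.nonempty_iff_ne_empty]
      intro hSe
      rw [hSe, Finset.prod_empty, mul_one] at hdecomp
      have hn1 : 1 ≤ n := by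
        rcases Nat.eq_zero_or_pos n with h0 | h1
        · rw [h0, pow_zero] at hdecomp; omega
        · exact h1
      have hqN : q ∣ N := by rw [hdecomp]; exact dvd_pow_self q (by omega)
      have hqb := hqb_of hqN
      have e1 : orderOf ((b : ℕ) : ZMod (q ^ n)) = orderOf ((b : ℕ) : ZMod N) :=
        congrArg (fun M : ℕ => orderOf ((b : ℕ) : ZMod M)) hdecomp.symm
      have hgpos : 0 < padicValNat q (orderOf ((b : ℕ) : ZMod (q ^ n))) := by
        rw [e1, htp]; omega
      have hup := Aux.g_upper (q := q) hb hqb (by omega) hgpos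
      rw [e1, htp] at hup
      have := hm1 hqN
      omega
    · intro p hp
      obtain ⟨hpp, hpq, hpN⟩ := hmem p hp
      exact ⟨hpp, hpq, Aux.one_le_pv hpp hN0 hpN⟩
    · intro p hp
      have := hap p hp
      omega
    · intro p' hp'
      have h1 := hap p' hp'
      constructor
      · by_cases hn0 : n = 0
        · rw [hn0]; omega
        · have hqN : q ∣ N := Aux.pv_pos_dvd hq hN0 (by omega)
          have hqb := hqb_of hqN
          have hm := hm1 hqN
          rcases hq.eq_two_or_odd' with h2 | hodd
          · omega
          · have hlow := Aux.g_lower (q := q) (n := n) hodd hb hqb (by omega)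
            have hgle : padicValNat q (orderOf (b : ZMod (q ^ n))) ≤ t := by
              have hd : orderOf (b : ZMod (q ^ n)) ∣ orderOf (b : ZMod N) :=
                Aux.order_map_dvd pow_padicValNat_dvd
              have := Aux.pv_mono (q := q) hd hopos.ne'
              rwa [htp] at this
            omega
      · intro p hp
        have h2 := hap p hp
        omega
  · -- backward
    rintro ⟨n, S, hfun, hnv, hSne, hprim, hNeq, hpv, hineq⟩
    intro p hp hpgcd
    have hPne : (∏ r ∈ S, r ^ hfun r) ≠ 0 :=
      (Finset.prod_pos (fun r hr => pow_pos (hprim r hr).1.pos _)).ne'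
    have hqP : ¬ q ∣ ∏ r ∈ S, r ^ hfun r := by
      have hcop : Nat.Coprime q (∏ r ∈ S, r ^ hfun r) :=
        Nat.Coprime.prod_right fun r hr =>
          Nat.Coprime.pow_right _ ((Nat.coprime_primes hq (hprim r hr).1).mpr
            (fun he => (hprim r hr).2.1 he.symm))
      intro hd
      have h1 : q ∣ 1 := hcop ▸ Nat.dvd_gcd dvd_rfl hd
      have h2 := hq.two_le
      have h3 := Nat.dvd_one.mp h1
      omega
    have hpN : p ∣ N := hpgcd.trans (Nat.gcd_dvd_right _ _)
    have hpE : p ∣ b ^ (q ^ (t - v) * k) - 1 := by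
      have := hpgcd.trans (Nat.gcd_dvd_left _ _)
      rwa [hEdef] at this
    have hpvN : padicValNat q N = n := by
      rw [hNeq]; exact Aux.pv_mul_pow hqP hPne
    by_cases hpq : p = q
    · subst hpq
      rw [padicValNat.prime_pow, hpvN]
      exact hnv
    · exfalso
      -- p ∈ S
      have hpS : p ∈ S := by
        have hd : p ∣ q ^ n * ∏ r ∈ S, r ^ hfun r := hNeq ▸ hpN
        rcases (Nat.Prime.dvd_mul hp).mp hd with h1 | h1
        · exact absurd ((Nat.prime_dvd_prime_iff_eq hp hq).mp (hp.dvd_of_dvd_pow h1)) hpq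
        · obtain ⟨r, hr, hpr⟩ := hp.prime.exists_mem_finset_dvd h1
          obtain ⟨hrp, hrq, hrpos⟩ := hprim r hr
          have : p = r := (Nat.prime_dvd_prime_iff_eq hp hrp).mp (hp.dvd_of_dvd_pow hpr)
          exact this ▸ hr
      have hbp : Nat.Coprime b p := hbN.coprime_dvd_right hpN
      have hppos : 0 < orderOf ((b : ℕ) : ZMod p) := Aux.order_pos hp.pos hbp
      have hdvdN : orderOf ((b : ℕ) : ZMod p) ∣ q ^ t * k := hord ▸ Aux.order_map_dvd hpN
      -- a_p + v ≤ t
      have hordE : orderOf ((b : ℕ) : ZMod p) ∣ q ^ (t - v) * k :=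
        (Aux.dvd_iff_order_dvd hb).mp hpE
      have hle : padicValNat q (orderOf ((b : ℕ) : ZMod p)) ≤ t - v :=
        (Aux.dvd_shift (s := t - v) hqk hk0 hppos.ne' hdvdN).mp hordE
      -- now bound t from above via the lcm of local orders
      set w := padicValNat q (orderOf ((b : ℕ) : ZMod p)) + v with hwdef
      -- facts about components
      have hqnN : (q : ℕ) ^ n ∣ N := hNeq ▸ dvd_mul_right _ _
      have hbqn : Nat.Coprime b (q ^ n) := hbN.coprime_dvd_right hqnN
      have hO0 : 0 < orderOf ((b : ℕ) : ZMod (q ^ n)) :=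
        Aux.order_pos (pow_pos hq.pos n) hbqn
      have hrN : ∀ r ∈ S, r ^ hfun r ∣ N := fun r hr =>
        hNeq ▸ dvd_mul_of_dvd_right (Finset.dvd_prod_of_mem _ hr) _
      have hrpos : ∀ r ∈ S, 0 < orderOf ((b : ℕ) : ZMod (r ^ hfun r)) := fun r hr =>
        Aux.order_pos (pow_pos (hprim r hr).1.pos _) (hbN.coprime_dvd_right (hrN r hr))
      have hrlt : ∀ r ∈ S, padicValNat q (orderOf ((b : ℕ) : ZMod (r ^ hfun r))) < w := by
        intro r hr
        obtain ⟨hrp, hrq, hrh⟩ := hprim r hr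
        have hrb : ¬ r ∣ b := by
          intro hd
          have h1 : r ∣ Nat.gcd N b := Nat.dvd_gcd ((dvd_pow_self r hrh.ne').trans (hrN r hr)) hd
          rw [hco] at h1
          have := hrp.two_le
          have := Nat.dvd_one.mp h1
          omega
        rw [Aux.pv_ord_pow hb hrp hrq hrh hrb]
        have := (hineq p hpS).2 r hr
        omega
      have hlcmS := Aux.pv_finset_lcm (q := q)
        (f := fun r => orderOf ((b : ℕ) : ZMod (r ^ hfun r)))
        (fun r hr => (hrpos r hr).ne') hrlt (by omega)
      -- the q-power component
      have hO0lt : padicValNat q (orderOf ((b : ℕ) : ZMod (q ^ n))) < w := by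
        by_cases hg0 : padicValNat q (orderOf ((b : ℕ) : ZMod (q ^ n))) = 0
        · omega
        · have hn1 : 0 < n := by
            rcases Nat.eq_zero_or_pos n with h0 | h1
            · exfalso
              apply hg0
              rw [h0, pow_zero]
              haveI : Subsingleton (ZMod 1) := (inferInstance : Subsingleton (Fin 1))
              rw [show ((b : ℕ) : ZMod 1) = 1 from Subsingleton.elim _ _, orderOf_one,
                padicValNat.one]
            · exact h1
          have hqN : q ∣ N := (dvd_pow_self q hn1.ne').trans hqnN
          have hqb := hqb_of hqN
          have hup := Aux.g_upper (q := q) (n := n) hb hqb hn1 (by omega)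
          have hm := hm1 hqN
          have := (hineq p hpS).1
          omega
      -- assemble the lcm
      set L := Nat.lcm (orderOf ((b : ℕ) : ZMod (q ^ n)))
        (S.lcm fun r => orderOf ((b : ℕ) : ZMod (r ^ hfun r))) with hLdef
      have hLne : L ≠ 0 := Nat.lcm_ne_zero hO0.ne' hlcmS.1
      have hLlt : padicValNat q L < w := by
        rw [hLdef, Aux.pv_lcm hO0.ne' hlcmS.1]
        exact max_lt hO0lt hlcmS.2
      have hNL : N ∣ b ^ L - 1 := by
        rw [hNeq]
        have hcopqn : Nat.Coprime (q ^ n) (∏ r ∈ S, r ^ hfun r) :=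
          Nat.Coprime.pow_left _ (Nat.Coprime.prod_right fun r hr =>
            Nat.Coprime.pow_right _ ((Nat.coprime_primes hq (hprim r hr).1).mpr
              (fun he => (hprim r hr).2.1 he.symm)))
        refine hcopqn.mul_dvd_of_dvd_of_dvd ?_ ?_
        · exact (Aux.dvd_iff_order_dvd hb).mpr (Nat.dvd_lcm_left _ _)
        · refine Aux.prod_dvd (fun r hr => (hprim r hr).1) ?_
          intro r hr
          exact (Aux.dvd_iff_order_dvd hb).mpr
            ((Finset.dvd_lcm hr).trans (Nat.dvd_lcm_right _ _))
      have hoL : orderOf ((b : ℕ) : ZMod N) ∣ L := (Aux.dvd_iff_order_dvd hb).mp hNL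
      have htL : t ≤ padicValNat q L := by
        have := Aux.pv_mono (q := q) hoL hLne
        rwa [htp] at this
      omega
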